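/- arXiv:2007.03088 — 7 statements merged into one kernel-verified Lean document; each statement's English description precedes it below -/
import Mathlib

section
/- Let k be a natural number with k+1 = 2^a · b where b is odd. Then for any integer x, [x]_{2k+1} = [x^{2^{a+1}}]_{b-1} · ∏_{i=0}^{a} (x^{2^i} + 1). -/
lemma geom_sum_factor (x : ℤ) (n m : ℕ) :
    (∑ j ∈ Finset.range (n * m), x ^ j)
      = (∑ j ∈ Finset.range m, (x ^ n) ^ j) * (∑ j ∈ Finset.range n, x ^ j) := by
  induction m with
  | zero => simp
  | succ m ih =>
      rw [Nat.mul_succ, Finset.sum_range_add, Finset.sum_range_succ, add_mul, ih]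
      congr 1
      rw [Finset.mul_sum]
      refine Finset.sum_congr rfl fun i _ => ?_
      rw [← pow_mul, ← pow_add]

lemma geom_sum_two_pow (x : ℤ) (s : ℕ) :
    (∑ j ∈ Finset.range (2 ^ s), x ^ j) = ∏ i ∈ Finset.range s, (x ^ (2 ^ i) + 1) := by
  induction s with
  | zero => simp
  | succ s ih =>
      rw [pow_succ, geom_sum_factor, Finset.prod_range_succ, ← ih]
      simp [Finset.sum_range_succ, mul_comm, add_comm]

theorem bracket_factorization (x : ℤ) (k a b : ℕ) (hb : Odd b) (hk : k + 1 = 2 ^ a * b) :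
    (∑ j ∈ Finset.range (2 * k + 2), x ^ j)
      = (∑ j ∈ Finset.range b, (x ^ (2 ^ (a + 1))) ^ j)
        * ∏ i ∈ Finset.range (a + 1), (x ^ (2 ^ i) + 1) := by
  have h : 2 * k + 2 = 2 ^ (a + 1) * b := by
    have : 2 * (k + 1) = 2 ^ (a + 1) * b := by rw [hk]; ring
    omega
  rw [h, geom_sum_factor, geom_sum_two_pow]
end

section
/- Let ρ be an odd prime and ℓ a positive integer. If ℓ is even then ν_2(σ(ρ^ℓ)) = 0, and if ℓ is odd then ν_2(σ(ρ^ℓ)) = ν_2(ℓ+1) + ν_2(ρ+1) - 1. -/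
lemma geom_aux (ρ n : ℕ) (h : 1 ≤ ρ) :
    (ρ - 1) * ∑ i ∈ Finset.range n, ρ ^ i = ρ ^ n - 1 := by
  induction n with
  | zero => simp
  | succ n ih =>
    rw [Finset.sum_range_succ, Nat.mul_add, ih]
    have h1 : 1 ≤ ρ ^ n := Nat.one_le_pow _ _ h
    have h2 : ρ ^ n ≤ ρ ^ (n+1) := Nat.pow_le_pow_right h (by omega)
    have hx : (ρ - 1) * ρ ^ n = ρ ^ (n + 1) - ρ ^ n := by
      rw [Nat.sub_mul, one_mul, ← pow_succ']
    omega

theorem val2_sigma_prime_pow (ρ ℓ : ℕ) (hρ : Nat.Prime ρ) (hρodd : Odd ρ) (hℓ : 0 < ℓ) :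
    (Even ℓ → padicValNat 2 (∑ d ∈ (ρ ^ ℓ).divisors, d) = 0) ∧
    (Odd ℓ → padicValNat 2 (∑ d ∈ (ρ ^ ℓ).divisors, d)
      = padicValNat 2 (ℓ + 1) + padicValNat 2 (ρ + 1) - 1) := by
  have hρ3 : 3 ≤ ρ := by
    rcases hρodd with ⟨k, hk⟩
    have := hρ.two_le
    omega
  obtain ⟨m, hm⟩ := hρodd
  have hsum : ∑ d ∈ (ρ ^ ℓ).divisors, d = ∑ i ∈ Finset.range (ℓ + 1), ρ ^ i := by
    simpa using Nat.sum_divisors_prime_pow (f := fun d => d) hρ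
  rw [hsum]
  set S := ∑ i ∈ Finset.range (ℓ + 1), ρ ^ i with hS
  have hmod : S % 2 = (ℓ + 1) % 2 := by
    rw [hS, Finset.sum_nat_mod]
    have : ∀ i ∈ Finset.range (ℓ + 1), ρ ^ i % 2 = 1 := by
      intro i _
      have : Odd (ρ ^ i) := Odd.pow (show Odd ρ from ⟨m, hm⟩)
      rw [Nat.odd_iff] at this
      omega
    rw [Finset.sum_congr rfl this]
    simp
  constructor
  · intro heven
    apply padicValNat.eq_zero_of_not_dvd
    rcases heven with ⟨k, hk⟩
    omega
  · intro hodd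
    have hne : ℓ + 1 ≠ 0 := by omega
    have hevenn : Even (ℓ + 1) := by
      rcases hodd with ⟨k, hk⟩
      exact ⟨k + 1, by omega⟩
    have key := padicValNat.pow_two_sub_pow (x := ρ) (y := 1) (by omega)
      (by omega) (by omega) hne hevenn
    rw [one_pow] at key
    have hgeo : (ρ - 1) * S = ρ ^ (ℓ + 1) - 1 := geom_aux ρ (ℓ + 1) (by omega)
    have hS0 : S ≠ 0 := by
      have : 0 < S := Finset.sum_pos (fun i _ => pow_pos (by omega) i) ⟨0, by simp⟩
      omega
    have hρ10 : ρ - 1 ≠ 0 := by omega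
    have hmul : padicValNat 2 ((ρ - 1) * S) = padicValNat 2 (ρ - 1) + padicValNat 2 S := by
      exact padicValNat.mul hρ10 hS0
    rw [hgeo] at hmul
    rw [hmul] at key
    -- ν2(ρ+1) ≥ 1
    have h1 : 1 ≤ padicValNat 2 (ρ + 1) := by
      apply one_le_padicValNat_of_dvd (by omega)
      exact ⟨m + 1, by omega⟩
    omega
end

section
/- Let n be a positive integer with prime factorization n = ∏_{j=1}^s p_j^{a_j}. Then ν_2(σ(n)) = ∑ ν_2((a_i+1)(p_i+1)/2), where the sum runs over those indices i with p_i odd and a_i odd. -/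
open Finset

lemma nat_geom_sum (p m : ℕ) (hp : 1 ≤ p) :
    (p - 1) * ∑ i ∈ range m, p ^ i = p ^ m - 1 := by
  induction m with
  | zero => simp
  | succ m ih =>
    rw [Finset.sum_range_succ, Nat.mul_add, ih]
    have h1 : 1 ≤ p ^ m := Nat.one_le_pow _ _ hp
    have h2 : p ^ m ≤ p ^ (m+1) := Nat.pow_le_pow_right hp (by omega)
    have : (p - 1) * p ^ m = p ^ (m+1) - p ^ m := by
      rw [Nat.sub_mul, one_mul, pow_succ, mul_comm]
    omega

lemma key_lemma (p a : ℕ) (hp : p.Prime) (hodd : Odd p) (ha : Odd a) :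
    padicValNat 2 (∑ i ∈ range (a + 1), p ^ i) = padicValNat 2 ((a + 1) * (p + 1) / 2) := by
  obtain ⟨m, hm⟩ : ∃ m, a + 1 = 2 * m := by
    obtain ⟨k, hk⟩ := ha; exact ⟨k + 1, by omega⟩
  have hp2 : p % 2 = 1 := Nat.odd_iff.mp hodd
  have hp3 : 3 ≤ p := by have := hp.two_le; omega
  have hm0 : m ≠ 0 := by omega
  have hS : ∑ i ∈ range (a + 1), p ^ i ≠ 0 := by
    have : 0 < ∑ i ∈ range (a + 1), p ^ i :=
      Finset.sum_pos (fun i _ => (Nat.pow_pos (by omega) : 0 < p ^ i)) ⟨0, by simp⟩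
    omega
  have hp1 : p - 1 ≠ 0 := by omega
  have hlte := padicValNat.pow_two_sub_pow (x := p) (y := 1) (n := a + 1) (by omega)
      ⟨(p - 1) / 2, by omega⟩ (by omega) (by omega) ⟨m, by omega⟩
  rw [one_pow] at hlte
  have hgeom := nat_geom_sum p (a + 1) (by omega)
  have hmul : padicValNat 2 ((p - 1) * ∑ i ∈ range (a + 1), p ^ i)
      = padicValNat 2 (p - 1) + padicValNat 2 (∑ i ∈ range (a + 1), p ^ i) :=
    padicValNat.mul hp1 hS
  rw [hgeom] at hmul
  have hright : (a + 1) * (p + 1) / 2 = m * (p + 1) := by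
    rw [hm, Nat.mul_assoc, Nat.mul_div_cancel_left _ (by norm_num)]
  rw [hright, padicValNat.mul hm0 (by omega)]
  have ha1 : padicValNat 2 (a + 1) = padicValNat 2 m + 1 := by
    rw [hm, padicValNat.mul (by norm_num) hm0, padicValNat.self (by norm_num)]
    omega
  omega
lemma padic_prod (s : Finset ℕ) (f : ℕ → ℕ) (hf : ∀ i ∈ s, f i ≠ 0) :
    padicValNat 2 (∏ i ∈ s, f i) = ∑ i ∈ s, padicValNat 2 (f i) := by
  classical
  induction s using Finset.induction with
  | empty => simp
  | @insert a s h ih =>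
    rw [Finset.prod_insert h, Finset.sum_insert h,
      padicValNat.mul (hf _ (Finset.mem_insert_self a s))
        (Finset.prod_ne_zero_iff.mpr fun i hi => hf i (Finset.mem_insert_of_mem hi)),
      ih fun i hi => hf i (Finset.mem_insert_of_mem hi)]

theorem val2_sigma_formula (n : ℕ) (hn : 0 < n) :
    padicValNat 2 (∑ d ∈ n.divisors, d)
      = ∑ p ∈ n.primeFactors.filter (fun p => Odd p ∧ Odd (n.factorization p)),
          padicValNat 2 ((n.factorization p + 1) * (p + 1) / 2) := by
  have hS : ∀ p ∈ n.primeFactors, (∑ k ∈ range (n.factorization p + 1), p ^ k) ≠ 0 := by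
    intro p hp
    have hp2 := (Nat.prime_of_mem_primeFactors hp).two_le
    have : 0 < ∑ k ∈ range (n.factorization p + 1), p ^ k :=
      Finset.sum_pos (fun i _ => (Nat.pow_pos (by omega) : 0 < p ^ i)) ⟨0, by simp⟩
    omega
  rw [Nat.sum_divisors hn.ne', padic_prod _ _ hS,
    ← Finset.sum_filter_of_ne (p := fun p => Odd p ∧ Odd (n.factorization p))]
  · refine Finset.sum_congr rfl fun p hp => ?_
    obtain ⟨hpf, hodd, hafodd⟩ := Finset.mem_filter.mp hp
    exact key_lemma p _ (Nat.prime_of_mem_primeFactors hpf) hodd hafodd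
  · intro p hp hne
    have hprime := Nat.prime_of_mem_primeFactors hp
    by_contra hcon
    apply hne
    apply padicValNat.eq_zero_of_not_dvd
    rw [Nat.two_dvd_ne_zero]
    rcases hprime.eq_two_or_odd with h2 | hoddp
    · subst h2
      have := nat_geom_sum 2 (n.factorization 2 + 1) (by omega)
      have hpow : 2 ≤ 2 ^ (n.factorization 2 + 1) := Nat.le_self_pow (by omega) 2
      omega
    · have hae : ¬ Odd (n.factorization p) := by
        intro h; exact hcon ⟨Nat.odd_iff.mpr hoddp, h⟩
      have : ∀ i ∈ range (n.factorization p + 1), p ^ i % 2 = 1 := fun i _ =>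
        Nat.odd_iff.mp ((Nat.odd_iff.mpr hoddp).pow)
      rw [Finset.sum_nat_mod, Finset.sum_congr rfl this, Finset.sum_const, card_range, smul_eq_mul, mul_one]
      rw [Nat.not_odd_iff_even] at hae
      obtain ⟨k, hk⟩ := hae
      omega
end

section
/- Let p be an odd prime and q a prime with q ≠ p, and let n ≥ 0. Then ν_p([q^{p^n}]_{p-1}) = 1 if q ≡ 1 (mod p), and ν_p([q^{p^n}]_{p-1}) = 0 otherwise. -/
theorem valp_bracket (p q : ℕ) (hp : Nat.Prime p) (hpodd : Odd p) (hq : Nat.Prime q)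
    (hne : q ≠ p) (n : ℕ) :
    padicValNat p (∑ i ∈ Finset.range p, (q ^ p ^ n) ^ i)
      = if q ≡ 1 [MOD p] then 1 else 0 := by
  haveI : Fact p.Prime := ⟨hp⟩
  set x : ℕ := q ^ p ^ n with hxdef
  have hq2 : 2 ≤ q := hq.two_le
  have hx1 : 1 < x := Nat.one_lt_pow (pow_ne_zero n hp.pos.ne') hq2
  have hpq : ¬ p ∣ q := fun h => hne ((Nat.prime_dvd_prime_iff_eq hp hq).mp h).symm
  -- x ≡ q mod p
  have hxq : (x : ZMod p) = (q : ZMod p) := by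
    rw [hxdef]; push_cast; exact ZMod.pow_card_pow _
  -- sum identity : (x-1) * S = x^p - 1
  set S : ℕ := ∑ i ∈ Finset.range p, x ^ i with hSdef
  have hkey : (x - 1) * S = x ^ p - 1 := by
    have := geom_sum_mul (x : ℤ) p
    have h1 : ((x : ℤ) - 1) * (S : ℤ) = (x : ℤ) ^ p - 1 := by
      rw [hSdef]; push_cast; rw [mul_comm]; exact this
    have hxp : 1 ≤ x ^ p := Nat.one_le_pow _ _ (by omega)
    zify [Nat.le_of_lt hx1, hxp]
    exact h1
  by_cases hmod : q ≡ 1 [MOD p]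
  · rw [if_pos hmod]
    have hq1 : (q : ZMod p) = 1 := by
      have : ((q : ℕ) : ZMod p) = ((1 : ℕ) : ZMod p) := (ZMod.natCast_eq_natCast_iff _ _ _).mpr hmod
      simpa using this
    have hdvd : p ∣ x - 1 := by
      have h1 : (((x - 1 : ℕ)) : ZMod p) = 0 := by
        push_cast [Nat.cast_sub (le_of_lt hx1)]
        rw [hxq, hq1]; ring
      exact (ZMod.natCast_eq_zero_iff _ _).mp h1
    have hxnd : ¬ p ∣ x := fun h => hpq (hp.dvd_of_dvd_pow h)
    have hLTE : padicValNat p (x ^ p - 1 ^ p) = padicValNat p (x - 1) + padicValNat p p :=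
      padicValNat.pow_sub_pow hpodd hx1 (by simpa using hdvd) hxnd hp.pos.ne'
    rw [one_pow] at hLTE
    have hS0 : S ≠ 0 := by
      have : 0 < S := Finset.sum_pos (fun i _ => pow_pos (by omega) i) ⟨0, Finset.mem_range.mpr hp.pos⟩
      omega
    have hx10 : x - 1 ≠ 0 := by omega
    have hmul : padicValNat p ((x - 1) * S) = padicValNat p (x - 1) + padicValNat p S :=
      padicValNat.mul hx10 hS0
    rw [hkey, hLTE, padicValNat.self hp.one_lt] at hmul
    omega
  · rw [if_neg hmod]
    -- show p does not divide S : S ≡ 1 mod p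
    have hq1 : (q : ZMod p) ≠ 1 := by
      intro h
      apply hmod
      have : ((q : ℕ) : ZMod p) = ((1 : ℕ) : ZMod p) := by exact_mod_cast h
      exact (ZMod.natCast_eq_natCast_iff _ _ _).mp this
    have hS : ((S : ℕ) : ZMod p) = 1 := by
      rw [hSdef]; push_cast
      rw [hxq]
      have := geom_sum_eq (K := ZMod p) hq1 p
      rw [this, ZMod.pow_card]
      exact div_self (sub_ne_zero.mpr hq1)
    apply padicValNat.eq_zero_of_not_dvd
    intro h
    have := (ZMod.natCast_eq_zero_iff S p).mpr h
    rw [hS] at this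
    exact one_ne_zero this
end

section
/- Let p be an odd prime and q a prime with q ≢ 1 (mod p) and q ≠ p. Let r be the multiplicative order of q modulo p. If r divides k+1, then ν_p(σ(q^k)) = ν_p(k+1) + ν_p(q^r - 1). -/
theorem valp_sigma_div (p q k : ℕ) (hp : Nat.Prime p) (hpodd : Odd p)
    (hq : Nat.Prime q) (hne : q ≠ p) (hcong : ¬ q ≡ 1 [MOD p])
    (hr : orderOf (q : ZMod p) ∣ (k + 1)) :
    padicValNat p (∑ d ∈ (q ^ k).divisors, d)
      = padicValNat p (k + 1) + padicValNat p (q ^ orderOf (q : ZMod p) - 1) := by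
  haveI : Fact p.Prime := ⟨hp⟩
  have hp2 : 2 ≤ p := hp.two_le
  set r := orderOf (q : ZMod p) with hrdef
  have hq2 : 2 ≤ q := hq.two_le
  -- p does not divide q
  have hpq : ¬ p ∣ q := by
    intro h
    exact hne ((Nat.prime_dvd_prime_iff_eq hp hq).mp h).symm
  have hqz : (q : ZMod p) ≠ 0 := by
    simpa [ZMod.natCast_eq_zero_iff] using hpq
  have hrpos : 0 < r := by
    apply orderOf_pos_iff.mpr
    exact isOfFinOrder_iff_pow_eq_one.mpr
      ⟨p - 1, by omega, ZMod.pow_card_sub_one_eq_one hqz⟩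
  -- r divides p - 1, hence p does not divide r
  have hrdvd : r ∣ p - 1 := ZMod.orderOf_dvd_card_sub_one hqz
  have hpr : ¬ p ∣ r := by
    intro h
    have : r < p := lt_of_le_of_lt (Nat.le_of_dvd (by omega) hrdvd) (by omega)
    have := Nat.le_of_dvd hrpos h
    omega
  -- p divides q^r - 1
  have hpow : (q : ZMod p) ^ r = 1 := pow_orderOf_eq_one _
  have hdvd : p ∣ q ^ r - 1 := by
    have : ((q ^ r : ℕ) : ZMod p) = ((1 : ℕ) : ZMod p) := by push_cast; simpa using hpow
    have hmod : 1 ≡ q ^ r [MOD p] := ((ZMod.natCast_eq_natCast_iff _ _ _).mp this).symm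
    exact (Nat.modEq_iff_dvd' (Nat.one_le_pow _ _ (by omega))).mp hmod
  -- p does not divide q - 1
  have hnd : ¬ p ∣ q - 1 := by
    intro h
    exact hcong (((Nat.modEq_iff_dvd' (by omega)).mpr h).symm)
  obtain ⟨m, hm⟩ := hr
  have hmpos : 0 < m := by
    rcases Nat.eq_zero_or_pos m with h | h
    · rw [h, mul_zero] at hm; omega
    · exact h
  -- the sum of divisors
  have hsum : (∑ d ∈ (q ^ k).divisors, d) * (q - 1) = q ^ (k + 1) - 1 := by
    rw [Nat.sum_divisors_prime_pow hq]
    exact geom_sum_mul_of_one_le (by omega) (k + 1)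
  have hq1pos : 0 < q - 1 := by omega
  have hSpos : 0 < ∑ d ∈ (q ^ k).divisors, d := by
    rcases Nat.eq_zero_or_pos (∑ d ∈ (q ^ k).divisors, d) with h | h
    · rw [h, zero_mul] at hsum
      have : 1 < q ^ (k + 1) := Nat.one_lt_pow (by omega) (by omega)
      omega
    · exact h
  -- key valuation computation
  have hval : padicValNat p (q ^ (k + 1) - 1)
      = padicValNat p (q ^ r - 1) + padicValNat p (k + 1) := by
    have h1 : q ^ (k + 1) = (q ^ r) ^ m := by rw [← pow_mul, ← hm]
    have h2 : 1 < q ^ r := Nat.one_lt_pow (by omega) (by omega)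
    rw [h1]
    have := padicValNat.pow_sub_pow (p := p) hpodd (x := q ^ r) (y := 1)
      (by omega) (by simpa using hdvd) (by
        intro h
        exact hpq (hp.dvd_of_dvd_pow h)) (n := m) (by omega)
    simp only [one_pow] at this
    rw [this, hm, padicValNat.mul (by omega) (by omega),
      padicValNat.eq_zero_of_not_dvd hpr, zero_add]
  -- conclude
  have := congrArg (padicValNat p) hsum
  rw [padicValNat.mul (by omega) (by omega),
    padicValNat.eq_zero_of_not_dvd hnd, add_zero] at this
  rw [this, hval, add_comm]
end

section
/- For every positive integer n, ν_2(σ(n)) ≤ ⌈log_2 n⌉. -/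
open Finset
private lemma sum_pow_mod_two' (x j : ℕ) (hx : x % 2 = 1) :
    (∑ i ∈ range j, x ^ i) % 2 = j % 2 := by
  induction j with
  | zero => simp
  | succ j ih =>
      rw [sum_range_succ]
      have h : x ^ j % 2 = 1 := by simp [Nat.pow_mod, hx]
      omega

private lemma geom_split' (x m : ℕ) :
    ∑ i ∈ range (2 * m + 2), x ^ i = (1 + x) * ∑ i ∈ range (m + 1), (x ^ 2) ^ i := by
  induction m with
  | zero => simp [sum_range_succ]
  | succ m ih =>
      have h1 : 2 * (m + 1) + 2 = (2 * m + 2) + 1 + 1 := by ring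
      rw [h1, sum_range_succ, sum_range_succ, ih, sum_range_succ _ (m + 1)]
      ring

private lemma val2_geom_sq : ∀ j : ℕ, ∀ r : ℕ, r % 2 = 1 →
    2 ^ padicValNat 2 (∑ i ∈ range (j + 1), (r ^ 2) ^ i) ≤ j + 1 := by
  intro j
  induction j using Nat.strong_induction_on with
  | _ j ih =>
    intro r hr
    have hr2 : r ^ 2 % 2 = 1 := by simp [Nat.pow_mod, hr]
    rcases Nat.even_or_odd j with hj | hj
    · have hj0 : j % 2 = 0 := Nat.even_iff.mp hj
      have hodd : (∑ i ∈ range (j + 1), (r ^ 2) ^ i) % 2 = 1 := by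
        rw [sum_pow_mod_two' _ _ hr2]
        omega
      rw [padicValNat.eq_zero_of_not_dvd (by omega)]
      simp
    · obtain ⟨m, hm⟩ := hj
      subst hm
      have h1 : 2 * m + 1 + 1 = 2 * m + 2 := by ring
      rw [h1, geom_split']
      have hrpos : 0 < r := by omega
      have hS : 0 < ∑ i ∈ range (m + 1), ((r ^ 2) ^ 2) ^ i := by positivity
      have h2 : (1 + r ^ 2) ≠ 0 := by positivity
      obtain ⟨s, hs⟩ : ∃ s, r = 2 * s + 1 := ⟨r / 2, by omega⟩
      have hval1 : padicValNat 2 (1 + r ^ 2) = 1 := by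
        have : 1 + r ^ 2 = 2 * (2 * s ^ 2 + 2 * s + 1) := by subst hs; ring
        rw [this, padicValNat.mul (by omega) (by omega), padicValNat.self (by omega),
          padicValNat.eq_zero_of_not_dvd (by omega)]
      rw [padicValNat.mul h2 hS.ne', hval1, pow_add, pow_one]
      have := ih m (by omega) (r ^ 2) hr2
      omega

private lemma ineq7 (p : ℕ) (hp : 3 ≤ p) : ∀ k, 3 ≤ k → (p + 1) * (k + 1) ≤ p ^ k := by
  intro k
  induction k with
  | zero => omega
  | succ k ih =>
      intro hk
      rcases Nat.lt_or_ge k 3 with h | h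
      · have hk2 : k = 2 := by omega
        subst hk2
        have h3 : p ^ (2 + 1) = p * p * p := by ring
        rw [h3]
        nlinarith
      · have h1 := ih h
        have h2 : p + 1 ≤ p ^ k := le_trans (by nlinarith) h1
        calc (p + 1) * (k + 1 + 1) = (p + 1) * (k + 1) + (p + 1) := by ring
          _ ≤ p ^ k + p ^ k := Nat.add_le_add h1 h2
          _ = 2 * p ^ k := by ring
          _ ≤ p * p ^ k := Nat.mul_le_mul_right _ (by omega)
          _ = p ^ (k + 1) := by ring

private lemma pp_bound {p : ℕ} (hp : p.Prime) (hodd : p % 2 = 1) (k : ℕ) (hk : 1 ≤ k) :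
    2 * 2 ^ padicValNat 2 (∑ i ∈ range (k + 1), p ^ i) ≤ p ^ k ∨
      (k = 1 ∧ p + 1 = 2 ^ padicValNat 2 (p + 1)) := by
  have hp3 : 3 ≤ p := by have := hp.two_le; omega
  rcases Nat.even_or_odd k with hke | hko
  · -- k even, k ≥ 2
    left
    have hk0 : k % 2 = 0 := Nat.even_iff.mp hke
    have hodds : (∑ i ∈ range (k + 1), p ^ i) % 2 = 1 := by
      rw [sum_pow_mod_two' _ _ hodd]; omega
    rw [padicValNat.eq_zero_of_not_dvd (by omega)]
    calc 2 * 2 ^ 0 = 2 := by norm_num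
      _ ≤ 3 ^ 2 := by norm_num
      _ ≤ p ^ k := (Nat.pow_le_pow_left hp3 2).trans (Nat.pow_le_pow_right (by omega) (by omega))
  · obtain ⟨m, hm⟩ := hko
    rcases Nat.eq_zero_or_pos m with rfl | hmpos
    · -- k = 1
      have hk1 : k = 1 := by omega
      subst hk1
      have hsum : (∑ i ∈ range 2, p ^ i) = p + 1 := by
        simp [sum_range_succ, Nat.add_comm]
      rw [hsum]
      set a := padicValNat 2 (p + 1) with ha
      have hfac : (p + 1).factorization 2 = a := Nat.factorization_def _ Nat.prime_two
      have hsplit : 2 ^ a * ((p + 1) / 2 ^ a) = p + 1 := by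
        rw [← hfac]; exact Nat.ordProj_mul_ordCompl_eq_self (p + 1) 2
      obtain ⟨t, hsplit, htodd⟩ : ∃ t, 2 ^ a * t = p + 1 ∧ ¬ 2 ∣ t := by
        refine ⟨(p + 1) / 2 ^ a, hsplit, ?_⟩
        have hc := Nat.coprime_ordCompl Nat.prime_two (show p + 1 ≠ 0 by omega)
        rw [hfac] at hc
        exact (Nat.Prime.coprime_iff_not_dvd Nat.prime_two).mp hc
      have hX : 1 ≤ 2 ^ a := Nat.one_le_two_pow
      rcases eq_or_ne t 1 with ht1 | ht1
      · right
        refine ⟨rfl, ?_⟩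
        rw [ht1, mul_one] at hsplit
        omega
      · left
        have ht3 : 3 ≤ t := by omega
        have h3 : 2 ^ a * 3 ≤ 2 ^ a * t := Nat.mul_le_mul_left _ ht3
        rw [pow_one]
        omega
    · -- k = 2m+1, m ≥ 1
      left
      subst hm
      have h1 : 2 * m + 1 + 1 = 2 * m + 2 := by ring
      rw [h1, geom_split']
      have hS : 0 < ∑ i ∈ range (m + 1), (p ^ 2) ^ i := by positivity
      have hmul : padicValNat 2 ((1 + p) * ∑ i ∈ range (m + 1), (p ^ 2) ^ i)
          = padicValNat 2 (1 + p) + padicValNat 2 (∑ i ∈ range (m + 1), (p ^ 2) ^ i) :=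
        padicValNat.mul (by omega) hS.ne'
      rw [hmul, pow_add]
      have hb1 : 2 ^ padicValNat 2 (1 + p) ≤ 1 + p :=
        Nat.le_of_dvd (by omega) pow_padicValNat_dvd
      have hb2 := val2_geom_sq m p hodd
      calc 2 * (2 ^ padicValNat 2 (1 + p) * 2 ^ padicValNat 2 (∑ i ∈ range (m + 1), (p ^ 2) ^ i))
          ≤ 2 * ((1 + p) * (m + 1)) := by
            exact Nat.mul_le_mul_left _ (Nat.mul_le_mul hb1 hb2)
        _ = (p + 1) * (2 * m + 1 + 1) := by ring
        _ ≤ p ^ (2 * m + 1) := ineq7 p hp3 _ (by omega)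

private lemma sigma_pos'' (n : ℕ) (hn : n ≠ 0) : 0 < ∑ d ∈ n.divisors, d := by
  have h1 : 1 ∈ n.divisors := Nat.one_mem_divisors.mpr hn
  exact lt_of_lt_of_le Nat.one_pos (Finset.single_le_sum (fun i _ => Nat.zero_le i) h1)

private lemma key' : ∀ m : ℕ, m % 2 = 1 → ∀ c : ℕ, 2 ≤ c →
    (∀ q ∈ m.primeFactors, ∀ a : ℕ, q + 1 = 2 ^ a → c ≤ a) →
    (2 ^ (c - 1) - 1) * 2 ^ padicValNat 2 (∑ d ∈ m.divisors, d) < 2 ^ (c - 1) * m := by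
  intro m
  induction m using Nat.strong_induction_on with
  | _ m ih =>
    intro hm c hc hH
    have hCpos : 0 < 2 ^ (c - 1) := Nat.pow_pos (by omega)
    rcases eq_or_ne m 1 with rfl | hm1
    · simp only [Nat.divisors_one, Finset.sum_singleton, padicValNat.one, pow_zero, mul_one]
      omega
    · have hm0 : m ≠ 0 := by omega
      have hp : m.minFac.Prime := Nat.minFac_prime hm1
      set p := m.minFac with hpdef
      have hpdvd : p ∣ m := Nat.minFac_dvd m
      have hpodd : p % 2 = 1 := by
        have hne : p ≠ 2 := by
          intro h
          rw [h] at hpdvd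
          omega
        exact Nat.odd_iff.mp (hp.odd_of_ne_two hne)
      have hp3 : 3 ≤ p := by have := hp.two_le; omega
      set k := m.factorization p with hkdef
      have hk1 : 1 ≤ k := hp.factorization_pos_of_dvd hm0 hpdvd
      set m' := m / p ^ k with hm'def
      have hmm : p ^ k * m' = m := Nat.ordProj_mul_ordCompl_eq_self m p
      have hm'dvd : m' ∣ m := Nat.ordCompl_dvd m p
      have hm'0 : m' ≠ 0 := by
        intro h
        rw [h, mul_zero] at hmm
        omega
      have hm'odd : m' % 2 = 1 := by
        rcases Nat.even_or_odd m' with h | h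
        · exfalso
          obtain ⟨d, hd⟩ := hm'dvd
          have : Even m := by
            rw [hd]
            exact h.mul_right d
          obtain ⟨t, ht⟩ := this
          omega
        · exact Nat.odd_iff.mp h
      have hm'lt : m' < m := by
        apply Nat.div_lt_self (by omega)
        exact Nat.one_lt_pow (by omega) hp.one_lt
      have hcop : Nat.Coprime (p ^ k) m' :=
        Nat.Coprime.pow_left _ (Nat.coprime_ordCompl hp hm0)
      have hσ : (∑ d ∈ m.divisors, d)
          = (∑ d ∈ (p ^ k).divisors, d) * (∑ d ∈ m'.divisors, d) := by
        conv_lhs => rw [← hmm]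
        exact Nat.Coprime.sum_divisors_mul hcop
      have hσpk : (∑ d ∈ (p ^ k).divisors, d) = ∑ i ∈ range (k + 1), p ^ i := by
        rw [← ArithmeticFunction.sigma_one_apply, ArithmeticFunction.sigma_one_apply_prime_pow hp]
      have hν : padicValNat 2 (∑ d ∈ m.divisors, d)
          = padicValNat 2 (∑ i ∈ range (k + 1), p ^ i)
            + padicValNat 2 (∑ d ∈ m'.divisors, d) := by
        rw [hσ, padicValNat.mul (by rw [hσpk] at *; exact (by positivity : (0:ℕ) < _).ne' )
          (sigma_pos'' m' hm'0).ne', hσpk]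
      have hHm' : ∀ q ∈ m'.primeFactors, ∀ a : ℕ, q + 1 = 2 ^ a → c ≤ a := by
        intro q hq a haa
        exact hH q (Nat.primeFactors_mono hm'dvd hm0 hq) a haa
      rw [hν, pow_add]
      rcases pp_bound hp hpodd k hk1 with hA | ⟨hk, hMers⟩
      · -- ordinary case
        have IH := ih m' hm'lt hm'odd c hc hHm'
        set νq := padicValNat 2 (∑ i ∈ range (k + 1), p ^ i)
        set νm := padicValNat 2 (∑ d ∈ m'.divisors, d)
        calc (2 ^ (c - 1) - 1) * (2 ^ νq * 2 ^ νm)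
            ≤ 2 * ((2 ^ (c - 1) - 1) * (2 ^ νq * 2 ^ νm)) := Nat.le_mul_of_pos_left _ (by omega)
          _ = (2 * 2 ^ νq) * ((2 ^ (c - 1) - 1) * 2 ^ νm) := by ring
          _ ≤ p ^ k * ((2 ^ (c - 1) - 1) * 2 ^ νm) := Nat.mul_le_mul_right _ hA
          _ < p ^ k * (2 ^ (c - 1) * m') :=
              (Nat.mul_lt_mul_left (show 0 < p ^ k by positivity)).mpr IH
          _ = 2 ^ (c - 1) * (p ^ k * m') := by ring
          _ = 2 ^ (c - 1) * m := by rw [hmm]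
      · -- Mersenne case
        set a := padicValNat 2 (p + 1) with hadef
        have ha2 : 2 ≤ a := by
          by_contra h
          push_neg at h
          interval_cases a <;> omega
        have hqmem : p ∈ m.primeFactors := Nat.mem_primeFactors.mpr ⟨hp, hpdvd, hm0⟩
        have hca : c ≤ a := hH p hqmem a hMers
        have hHm'2 : ∀ q ∈ m'.primeFactors, ∀ b : ℕ, q + 1 = 2 ^ b → a + 1 ≤ b := by
          intro q hq b hb
          have hqm : q ∈ m.primeFactors := Nat.primeFactors_mono hm'dvd hm0 hq
          have hqprime : q.Prime := Nat.prime_of_mem_primeFactors hqm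
          have hqdvd : q ∣ m := Nat.dvd_of_mem_primeFactors hqm
          have hpq : p ≤ q := Nat.minFac_le_of_dvd hqprime.two_le hqdvd
          have hne : q ≠ p := by
            intro h
            rw [h] at hq
            exact Nat.not_dvd_ordCompl hp hm0 (Nat.dvd_of_mem_primeFactors hq)
          have hlt : p < q := lt_of_le_of_ne hpq (Ne.symm hne)
          have : (2:ℕ) ^ a < 2 ^ b := by omega
          have := (Nat.pow_lt_pow_iff_right (a := 2) (by omega)).mp this
          omega
        have IH := ih m' hm'lt hm'odd (a + 1) (by omega) hHm'2
        rw [Nat.add_sub_cancel] at IH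
        -- νq = a since sum = p + 1 = 2^a
        have hνq : padicValNat 2 (∑ i ∈ range (k + 1), p ^ i) = a := by
          rw [hk]
          have hsum : (∑ i ∈ range (1 + 1), p ^ i) = p + 1 := by
            simp [sum_range_succ, Nat.add_comm]
          rw [hsum]
        rw [hνq]
        have hpk : p ^ k = p := by rw [hk, pow_one]
        rw [← hmm, hpk]
        set C := (2:ℕ) ^ (c - 1) with hCdef
        set A := (2:ℕ) ^ a with hAdef
        set νm := padicValNat 2 (∑ d ∈ m'.divisors, d)
        have hA2C : 2 * C ≤ A := by
          have : (2:ℕ) ^ c ≤ 2 ^ a := Nat.pow_le_pow_right (by omega) hca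
          have hcc : 2 ^ c = 2 * 2 ^ (c - 1) := by
            rw [← pow_succ']
            congr 1
            omega
          omega
        have hC2 : 2 ≤ C := by
          have : (2:ℕ) ^ 1 ≤ 2 ^ (c - 1) := Nat.pow_le_pow_right (by omega) (by omega)
          simpa using this
        have hpA : p = A - 1 := by omega
        have hA1pos : 0 < A - 1 := by omega
        -- key' numeric inequality
        have hnum : (C - 1) * A * A ≤ C * (A - 1) * (A - 1) := by
          obtain ⟨D, hD⟩ : ∃ D, C = D + 1 := ⟨C - 1, by omega⟩
          obtain ⟨B, hB⟩ : ∃ B, A = B + 1 := ⟨A - 1, by omega⟩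
          have h2 : 2 * (D + 1) ≤ B + 1 := by omega
          rw [hD, hB]
          simp only [Nat.add_sub_cancel]
          nlinarith
        -- multiply goal by (A - 1)
        have main : (A - 1) * ((C - 1) * (A * 2 ^ νm)) < (A - 1) * (C * (p * m')) := by
          calc (A - 1) * ((C - 1) * (A * 2 ^ νm))
              = ((C - 1) * A) * ((A - 1) * 2 ^ νm) := by ring
            _ < ((C - 1) * A) * (A * m') :=
                (Nat.mul_lt_mul_left (Nat.mul_pos (show 0 < C - 1 by omega)
                  (show 0 < A by positivity))).mpr IH
            _ = ((C - 1) * A * A) * m' := by ring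
            _ ≤ (C * (A - 1) * (A - 1)) * m' := Nat.mul_le_mul_right _ hnum
            _ = (A - 1) * (C * ((A - 1) * m')) := by ring
            _ = (A - 1) * (C * (p * m')) := by rw [← hpA]
        exact Nat.lt_of_mul_lt_mul_left main

theorem val2_sigma_le (n : ℕ) (hn : 0 < n) :
    padicValNat 2 (∑ d ∈ n.divisors, d) ≤ Nat.clog 2 n := by
  have hn0 : n ≠ 0 := hn.ne'
  set e := n.factorization 2 with hedef
  set m := n / 2 ^ e with hmdef
  have hmm : 2 ^ e * m = n := Nat.ordProj_mul_ordCompl_eq_self n 2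
  have hm0 : m ≠ 0 := by
    intro h
    rw [h, mul_zero] at hmm
    omega
  have hmodd : m % 2 = 1 := by
    have h2 : ¬ 2 ∣ m := Nat.not_dvd_ordCompl Nat.prime_two hn0
    omega
  have hcop : Nat.Coprime (2 ^ e) m :=
    Nat.Coprime.pow_left _ (Nat.coprime_ordCompl Nat.prime_two hn0)
  have hσ : (∑ d ∈ n.divisors, d)
      = (∑ d ∈ (2 ^ e).divisors, d) * (∑ d ∈ m.divisors, d) := by
    conv_lhs => rw [← hmm]
    exact Nat.Coprime.sum_divisors_mul hcop
  have hσ2 : (∑ d ∈ (2 ^ e).divisors, d) = ∑ i ∈ range (e + 1), 2 ^ i := by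
    rw [← ArithmeticFunction.sigma_one_apply,
      ArithmeticFunction.sigma_one_apply_prime_pow Nat.prime_two]
  have hodd2 : (∑ i ∈ range (e + 1), 2 ^ i) % 2 = 1 := by
    clear hσ hσ2
    induction e with
    | zero => simp
    | succ e ihe =>
        rw [sum_range_succ]
        have : (2:ℕ) ^ (e + 1) % 2 = 0 := by
          simp [Nat.pow_mod]
        omega
  have hν : padicValNat 2 (∑ d ∈ n.divisors, d)
      = padicValNat 2 (∑ d ∈ m.divisors, d) := by
    rw [hσ, hσ2, padicValNat.mul (by omega) (sigma_pos'' m hm0).ne',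
      padicValNat.eq_zero_of_not_dvd (by omega), zero_add]
  have hH : ∀ q ∈ m.primeFactors, ∀ a : ℕ, q + 1 = 2 ^ a → 2 ≤ a := by
    intro q hq a haa
    have hqp : q.Prime := Nat.prime_of_mem_primeFactors hq
    have hq2 : q ≠ 2 := by
      intro h
      have := Nat.dvd_of_mem_primeFactors hq
      rw [h] at this
      omega
    have hq3 : 3 ≤ q := by have := hqp.two_le; omega
    by_contra h
    push_neg at h
    interval_cases a <;> omega
  have hkey := key' m hmodd 2 le_rfl hH
  norm_num at hkey
  -- hkey : 2 ^ padicValNat 2 (∑ d ∈ m.divisors, d) < 2 * m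
  rw [hν]
  set ν := padicValNat 2 (∑ d ∈ m.divisors, d) with hνdef
  have hle : ν ≤ Nat.clog 2 m := by
    by_contra h
    push_neg at h
    have h1 : m ≤ 2 ^ Nat.clog 2 m := Nat.le_pow_clog one_lt_two m
    have h2 : (2:ℕ) ^ (Nat.clog 2 m + 1) ≤ 2 ^ ν := Nat.pow_le_pow_right (by omega) (by omega)
    have h3 : (2:ℕ) ^ (Nat.clog 2 m + 1) = 2 * 2 ^ Nat.clog 2 m := by
      rw [pow_succ]; ring
    omega
  refine hle.trans (Nat.clog_mono_right 2 ?_)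
  exact Nat.le_of_dvd hn (Nat.ordCompl_dvd n 2)
end

section
/- Let p be an odd prime and q ≠ p a prime, with q ≢ 1 (mod p). Suppose σ(q^k) = p^s for some s ≥ 1 and that p does not divide k+1. Then k+1 equals the multiplicative order of q modulo p. -/
open Finset

lemma geom_factor (x d m : ℕ) :
    ∑ i ∈ range (d * m), x ^ i
      = (∑ i ∈ range d, x ^ i) * (∑ j ∈ range m, (x ^ d) ^ j) := by
  induction m with
  | zero => simp
  | succ m ih =>
    rw [Nat.mul_succ, Finset.sum_range_add, ih, Finset.sum_range_succ, Nat.mul_add]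
    congr 1
    calc ∑ i ∈ range d, x ^ (d * m + i)
        = ∑ i ∈ range d, x ^ i * (x ^ d) ^ m := by
          refine Finset.sum_congr rfl fun i _ => ?_
          rw [pow_add, pow_mul, mul_comm]
    _ = (∑ i ∈ range d, x ^ i) * (x ^ d) ^ m := by rw [Finset.sum_mul]

theorem order_eq_of_sigma_prime_pow (p q k s : ℕ) (hp : Nat.Prime p) (hpodd : Odd p)
    (hq : Nat.Prime q) (hne : q ≠ p) (hcong : ¬ q ≡ 1 [MOD p]) (hs : 1 ≤ s)
    (hsig : (∑ d ∈ (q ^ k).divisors, d) = p ^ s) (hnd : ¬ p ∣ (k + 1)) :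
    k + 1 = orderOf (q : ZMod p) := by
  haveI : Fact p.Prime := ⟨hp⟩
  have hq0 : 0 < q := hq.pos
  have hsum : ∑ i ∈ range (k + 1), q ^ i = p ^ s := by
    rw [Nat.sum_divisors_prime_pow hq] at hsig
    simpa using hsig
  have hq1 : (q : ZMod p) ≠ 1 := by
    intro h
    exact hcong ((ZMod.natCast_eq_natCast_iff _ _ _).mp (by simpa using h))
  have hqsub : (q : ZMod p) - 1 ≠ 0 := sub_ne_zero.mpr hq1
  -- cast of geometric sums
  have hcast : ∀ n : ℕ, ((∑ i ∈ range n, q ^ i : ℕ) : ZMod p)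
      = ∑ i ∈ range n, (q : ZMod p) ^ i := by
    intro n; push_cast; rfl
  -- sum ≡ 0 mod p
  have hzero : (∑ i ∈ range (k + 1), (q : ZMod p) ^ i) = 0 := by
    rw [← hcast, hsum]
    push_cast
    rw [ZMod.natCast_self, zero_pow (by omega)]
  have hpow1 : (q : ZMod p) ^ (k + 1) = 1 := by
    have := geom_sum_mul (q : ZMod p) (k + 1)
    rw [hzero, zero_mul] at this
    have := sub_eq_zero.mp this.symm
    exact this
  set d := orderOf (q : ZMod p) with hd
  have hddvd : d ∣ k + 1 := orderOf_dvd_of_pow_eq_one hpow1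
  obtain ⟨m, hm⟩ := hddvd
  have hd0 : d ≠ 0 := by rintro h; rw [h] at hm; simp at hm
  have hm0 : m ≠ 0 := by rintro h; rw [h] at hm; simp at hm
  have hfac : (∑ i ∈ range d, q ^ i) * (∑ j ∈ range m, (q ^ d) ^ j) = p ^ s := by
    rw [← geom_factor, ← hm, hsum]
  -- p does not divide S
  have hpm : ¬ p ∣ m := fun h => hnd (h.trans ⟨d, by rw [hm, mul_comm]⟩)
  have hScast : ((∑ j ∈ range m, (q ^ d) ^ j : ℕ) : ZMod p) = (m : ZMod p) := by
    push_cast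
    have : ((q : ZMod p) ^ d) = 1 := pow_orderOf_eq_one _
    simp [this]
  have hpS : ¬ p ∣ ∑ j ∈ range m, (q ^ d) ^ j := by
    intro h
    rw [← ZMod.natCast_eq_zero_iff, hScast] at h
    exact hpm ((ZMod.natCast_eq_zero_iff _ _).mp h)
  -- p divides T
  have hpT : p ∣ ∑ i ∈ range d, q ^ i := by
    rw [← ZMod.natCast_eq_zero_iff, hcast]
    have h := geom_sum_mul (q : ZMod p) d
    rw [pow_orderOf_eq_one, sub_self] at h
    rcases mul_eq_zero.mp h with h' | h'
    · exact h'
    · exact absurd h' hqsub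
  -- S divides p^s, coprime to p, so S = 1
  have hSdvd : (∑ j ∈ range m, (q ^ d) ^ j) ∣ p ^ s := ⟨_, by rw [mul_comm, hfac]⟩
  obtain ⟨b, hb, hSeq⟩ := (Nat.dvd_prime_pow hp).mp hSdvd
  have hb0 : b = 0 := by
    by_contra h
    exact hpS (hSeq ▸ dvd_pow_self p h)
  rw [hb0, pow_zero] at hSeq
  -- S ≥ m
  have hmle : m ≤ ∑ j ∈ range m, (q ^ d) ^ j := by
    calc m = ∑ _j ∈ range m, 1 := by simp
    _ ≤ ∑ j ∈ range m, (q ^ d) ^ j :=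
      Finset.sum_le_sum fun j _ => Nat.one_le_pow _ _ (pow_pos hq0 _)
  have hm1 : m = 1 := by omega
  rw [hm, hm1, mul_one]
end
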